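/- arXiv:2201.08003 — 3 statements merged into one kernel-verified Lean document; each statement's English description precedes it below -/
import Mathlib

section
/- Let B ∈ R^{K×m} have rank K and Σ_W ∈ R^{K×K} be symmetric positive definite. Let P_B = B^T (B B^T)^{-1} B be the orthogonal projection onto the row space of B. Then for every i, j, the (i,j) entry of Θ P_B satisfies |(Θ P_B)_{ij}| ≤ ‖Θ_{i·}‖_1 · (max_{1≤ℓ≤m} ‖Σ_W^{1/2} B_ℓ‖_2) · ‖Σ_W^{1/2} B_j‖_2 / λ_K(B^T Σ_W B), where Θ_{i·} is the i-th row of Θ ∈ R^{p×m}, B_ℓ is the ℓ-th column of B, and λ_K(M) denotes the K-th largest eigenvalue of M. -/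
open Matrix MeasureTheory

noncomputable def l1norm {p : ℕ} (v : Fin p → ℝ) : ℝ := ∑ i, |v i|
noncomputable def l2norm {p : ℕ} (v : Fin p → ℝ) : ℝ := Real.sqrt (∑ i, v i ^ 2)
noncomputable def linfnorm {p : ℕ} (v : Fin p → ℝ) : ℝ := ⨆ i, |v i|

/-- ℓ2→ℓ2 operator norm of a real matrix. -/
noncomputable def opNorm {n m : ℕ} (A : Matrix (Fin n) (Fin m) ℝ) : ℝ :=
  ‖LinearMap.toContinuousLinearMap (Matrix.toEuclideanLin A)‖

noncomputable def sortedDesc {n : ℕ} (f : Fin n → ℝ) : Fin n → ℝ :=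
  fun i => (f ∘ Tuple.sort f) i.rev

open Classical in
/-- `eigDesc A k` is the (k+1)-th largest eigenvalue of a real symmetric matrix `A`
(and `0` if `A` is not symmetric). -/
noncomputable def eigDesc {n : ℕ} (A : Matrix (Fin n) (Fin n) ℝ) : Fin n → ℝ :=
  if h : A.IsHermitian then sortedDesc h.eigenvalues else 0

/-- `singDesc A k` is the (k+1)-th largest singular value of `A`. -/
noncomputable def singDesc {n m : ℕ} (A : Matrix (Fin n) (Fin m) ℝ) : Fin m → ℝ :=
  fun k => Real.sqrt (eigDesc (Aᵀ * A) k)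

/- ### Auxiliary lemmas -/

lemma sortedDesc_facts {m K : ℕ} (hK : 0 < K) (hKm : K ≤ m) (μ : Fin m → ℝ)
    (hnn : ∀ i, 0 ≤ μ i) (hcard : Fintype.card {i // μ i ≠ 0} = K) :
    0 < sortedDesc μ ⟨K-1, Nat.sub_one_lt_of_le hK hKm⟩ ∧
      ∀ i, μ i ≠ 0 → sortedDesc μ ⟨K-1, Nat.sub_one_lt_of_le hK hKm⟩ ≤ μ i := by
  set σ := Tuple.sort μ with hσ
  have hg : Monotone (μ ∘ σ) := Tuple.monotone_sort μ
  set g := μ ∘ σ with hgdef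
  have hgnn : ∀ i, 0 ≤ g i := fun i => hnn _
  have hcard' : (Finset.univ.filter (fun i => g i ≠ 0)).card = K := by
    have h2 : Fintype.card {i // g i ≠ 0} = K := by
      rw [← hcard]
      exact Fintype.card_congr (σ.subtypeEquiv (fun i => Iff.rfl))
    rw [Fintype.card_subtype] at h2
    exact h2
  have hzero : ∀ idx : Fin m, (idx : ℕ) < m - K → g idx = 0 := by
    intro idx hidx
    by_contra hne
    have hsub : Finset.Ici idx ⊆ Finset.univ.filter (fun i => g i ≠ 0) := by
      intro j hj
      simp only [Finset.mem_Ici] at hj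
      simp only [Finset.mem_filter, Finset.mem_univ, true_and]
      have h3 : 0 < g idx := lt_of_le_of_ne (hgnn idx) (Ne.symm hne)
      exact ne_of_gt (lt_of_lt_of_le h3 (hg hj))
    have h4 := Finset.card_le_card hsub
    rw [Fin.card_Ici, hcard'] at h4
    omega
  have hpos0 : 0 < g ⟨m - K, by omega⟩ := by
    by_contra hle
    have h0 : g ⟨m - K, by omega⟩ = 0 := le_antisymm (not_lt.mp hle) (hgnn _)
    have hsub : Finset.univ.filter (fun i => g i ≠ 0) ⊆ Finset.Ioi ⟨m - K, by omega⟩ := by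
      intro j hj
      simp only [Finset.mem_filter, Finset.mem_univ, true_and] at hj
      simp only [Finset.mem_Ioi]
      by_contra hlt
      exact hj (le_antisymm (h0 ▸ hg (not_lt.mp hlt)) (hgnn j))
    have h5 := Finset.card_le_card hsub
    have h6 : K ≤ (Finset.Ioi (⟨m - K, by omega⟩ : Fin m)).card :=
      le_of_eq_of_le hcard'.symm h5
    rw [Fin.card_Ioi] at h6
    simp only [Fin.val_mk] at h6
    omega
  have hrev : sortedDesc μ ⟨K-1, Nat.sub_one_lt_of_le hK hKm⟩ = g ⟨m - K, by omega⟩ := by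
    show g (Fin.rev ⟨K-1, Nat.sub_one_lt_of_le hK hKm⟩) = _
    congr 1
    ext
    simp [Fin.rev]
    omega
  refine ⟨hrev ▸ hpos0, ?_⟩
  intro i hi
  rw [hrev]
  have hμi : μ i = g (σ.symm i) := by simp [hgdef]
  rw [hμi]
  apply hg
  rw [Fin.le_def]
  simp only [Fin.val_mk]
  by_contra hlt
  rw [hμi] at hi
  exact hi (hzero _ (by omega))

lemma l2norm_nonneg {n : ℕ} (v : Fin n → ℝ) : 0 ≤ l2norm v := Real.sqrt_nonneg _

lemma mulVec_dot {k l : ℕ} (A : Matrix (Fin k) (Fin l) ℝ) (x : Fin l → ℝ) (z : Fin k → ℝ) :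
    (A *ᵥ x) ⬝ᵥ z = x ⬝ᵥ (Aᵀ *ᵥ z) := by
  rw [dotProduct_comm, dotProduct_mulVec, ← mulVec_transpose, dotProduct_comm,
    dotProduct_mulVec, vecMul_transpose]

lemma rayleigh_lb {K m : ℕ} (C : Matrix (Fin K) (Fin m) ℝ)
    (hH : (Cᵀ * C).IsHermitian) (lam : ℝ)
    (hlam : ∀ i, hH.eigenvalues i ≠ 0 → lam ≤ hH.eigenvalues i)
    (w : Fin K → ℝ) :
    lam * ((Cᵀ *ᵥ w) ⬝ᵥ (Cᵀ *ᵥ w)) ≤ (Cᵀ *ᵥ w) ⬝ᵥ ((Cᵀ * C) *ᵥ (Cᵀ *ᵥ w)) := by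
  set μ := hH.eigenvalues with hμ
  set y := Cᵀ *ᵥ w with hy
  set U : Matrix (Fin m) (Fin m) ℝ := (hH.eigenvectorUnitary : Matrix (Fin m) (Fin m) ℝ) with hUdef
  have hmem := (hH.eigenvectorUnitary).2
  have hU1 : U * star U = 1 := mem_unitaryGroup_iff.mp hmem
  have hU2 : star U * U = 1 := mem_unitaryGroup_iff'.mp hmem
  have hsU : star U = Uᵀ := by
    rw [Matrix.star_eq_conjTranspose]; simp
  set a : Fin m → ℝ := Uᵀ *ᵥ y with ha
  have key1 : y ⬝ᵥ y = ∑ i, (a i)^2 := by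
    have : a ⬝ᵥ a = y ⬝ᵥ y := by
      rw [ha, mulVec_dot, transpose_transpose, mulVec_mulVec, ← hsU, hU1, one_mulVec]
    rw [← this]
    simp [dotProduct, sq]
  have key2 : y ⬝ᵥ ((Cᵀ * C) *ᵥ y) = ∑ i, μ i * (a i)^2 := by
    have hofr : (RCLike.ofReal ∘ μ : Fin m → ℝ) = μ := by funext i; simp
    conv_lhs => rw [hH.spectral_theorem, Unitary.conjStarAlgAut_apply, ← hUdef]
    rw [hofr, hsU, ← mulVec_mulVec, ← mulVec_mulVec]
    rw [show y ⬝ᵥ (U *ᵥ ((diagonal μ) *ᵥ (Uᵀ *ᵥ y))) = (Uᵀ *ᵥ y) ⬝ᵥ ((diagonal μ) *ᵥ (Uᵀ *ᵥ y)) from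
      (mulVec_dot Uᵀ y _).symm ▸ rfl]
    · rw [← ha]
      simp [dotProduct, mulVec_diagonal, sq]
      congr 1; funext i; ring
  have key3 : ∀ i, μ i = 0 → a i = 0 := by
    intro i hi0
    set u : Fin m → ℝ := ⇑(hH.eigenvectorBasis i) with hu
    have hai : a i = u ⬝ᵥ y := by
      rw [ha]
      simp only [mulVec, dotProduct, transpose_apply]
      refine Finset.sum_congr rfl fun j _ => ?_
      rw [hu, hUdef, Matrix.IsHermitian.eigenvectorUnitary_apply hH j i]
    have hCu : C *ᵥ u = 0 := by
      have h0 : (C *ᵥ u) ⬝ᵥ (C *ᵥ u) = 0 := by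
        rw [mulVec_dot, mulVec_mulVec, hH.mulVec_eigenvectorBasis, ← hu, ← hμ, hi0]
        simp
      exact dotProduct_self_eq_zero.mp h0
    rw [hai, hy, dotProduct_comm, mulVec_dot, transpose_transpose, hCu]
    simp
  rw [key1, key2, Finset.mul_sum]
  apply Finset.sum_le_sum
  intro i _
  by_cases hi : μ i = 0
  · rw [key3 i hi, hi]; simp
  · exact mul_le_mul_of_nonneg_right (hlam i hi) (sq_nonneg _)

section Main

variable {p m K : ℕ}

lemma eig_facts (hK : 0 < K) (hKm : K ≤ m)
    (B : Matrix (Fin K) (Fin m) ℝ) (hB : B.rank = K)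
    (SW R : Matrix (Fin K) (Fin K) ℝ) (hSW : SW.PosDef)
    (hR : R.PosSemidef) (hRR : R * R = SW) :
    0 < eigDesc (Bᵀ * SW * B) ⟨K - 1, Nat.sub_one_lt_of_le hK hKm⟩ ∧
      ∀ w : Fin K → ℝ,
        eigDesc (Bᵀ * SW * B) ⟨K - 1, Nat.sub_one_lt_of_le hK hKm⟩ * (((R*B)ᵀ *ᵥ w) ⬝ᵥ ((R*B)ᵀ *ᵥ w)) ≤
          ((R*B)ᵀ *ᵥ w) ⬝ᵥ ((Bᵀ * SW * B) *ᵥ ((R*B)ᵀ *ᵥ w)) := by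
  have hRT : Rᵀ = R := (by simpa using hR.1 : R.IsSymm).eq
  have hdetR : IsUnit R.det := by
    have h1 : R.det * R.det = SW.det := by rw [← det_mul, hRR]
    have h2 : 0 < SW.det := hSW.det_pos
    refine isUnit_iff_ne_zero.mpr (fun h => ?_)
    rw [h, mul_zero] at h1
    rw [← h1] at h2
    exact lt_irrefl _ h2
  have hNC : Bᵀ * SW * B = (R*B)ᵀ * (R*B) := by
    rw [transpose_mul, hRT, ← hRR]
    simp only [Matrix.mul_assoc]
  rw [hNC]
  have hNps : ((R*B)ᵀ * (R*B)).PosSemidef := by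
    simpa using Matrix.posSemidef_conjTranspose_mul_self (R*B)
  have hH : ((R*B)ᵀ * (R*B)).IsHermitian := hNps.1
  have hrank : ((R*B)ᵀ * (R*B)).rank = K := by
    rw [Matrix.rank_transpose_mul_self, Matrix.rank_mul_eq_right_of_isUnit_det R B hdetR, hB]
  have hcard : Fintype.card {i // hH.eigenvalues i ≠ 0} = K := by
    rw [← Matrix.IsHermitian.rank_eq_card_non_zero_eigs hH]
    exact hrank
  have heig : eigDesc ((R*B)ᵀ * (R*B)) (⟨K - 1, Nat.sub_one_lt_of_le hK hKm⟩ : Fin m) =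
      sortedDesc hH.eigenvalues ⟨K - 1, Nat.sub_one_lt_of_le hK hKm⟩ := by
    rw [eigDesc, dif_pos hH]
  obtain ⟨hpos, hmin⟩ := sortedDesc_facts hK hKm hH.eigenvalues
    (fun i => hNps.eigenvalues_nonneg i) hcard
  rw [heig]
  exact ⟨hpos, fun w => rayleigh_lb (R*B) hH _ hmin w⟩

lemma entry_bound (hK : 0 < K) (hKm : K ≤ m)
    (B : Matrix (Fin K) (Fin m) ℝ) (hB : B.rank = K)
    (SW R : Matrix (Fin K) (Fin K) ℝ) (hSW : SW.PosDef)
    (hR : R.PosSemidef) (hRR : R * R = SW) (l j : Fin m) :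
    |(Bᵀ * (B * Bᵀ)⁻¹ * B) l j| * eigDesc (Bᵀ * SW * B) ⟨K - 1, Nat.sub_one_lt_of_le hK hKm⟩ ≤
      l2norm (R.mulVec (fun k => B k l)) * l2norm (R.mulVec (fun k => B k j)) := by
  have hRT : Rᵀ = R := (by simpa using hR.1 : R.IsSymm).eq
  have hdetR : IsUnit R.det := by
    have h1 : R.det * R.det = SW.det := by rw [← det_mul, hRR]
    have h2 : 0 < SW.det := hSW.det_pos
    refine isUnit_iff_ne_zero.mpr (fun h => ?_)
    rw [h, mul_zero] at h1
    rw [← h1] at h2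
    exact lt_irrefl _ h2
  have hNC : Bᵀ * SW * B = (R*B)ᵀ * (R*B) := by
    rw [transpose_mul, hRT, ← hRR]
    simp only [Matrix.mul_assoc]
  -- injectivity of Bᵀ *ᵥ
  have hBTinj : ∀ x : Fin K → ℝ, Bᵀ *ᵥ x = 0 → x = 0 := by
    have hr : (Bᵀ).rank = K := by rw [Matrix.rank_transpose, hB]
    have hrn := (Bᵀ).mulVecLin.finrank_range_add_finrank_ker
    rw [Matrix.rank] at hr
    have hfin : Module.finrank ℝ (Fin K → ℝ) = K := by simp
    rw [hr, hfin] at hrn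
    have hker0 : Module.finrank ℝ (LinearMap.ker (Bᵀ).mulVecLin) = 0 := by omega
    have hker : LinearMap.ker (Bᵀ).mulVecLin = ⊥ := Submodule.finrank_eq_zero.mp hker0
    intro x hx
    rw [Matrix.mulVec_transpose] at hx
    have hmem : x ∈ LinearMap.ker (Bᵀ).mulVecLin := by
      simpa [Matrix.mulVecLin_apply] using hx
    rw [hker] at hmem
    simpa using hmem
  have hGpd : (B * Bᵀ).PosDef := by
    refine Matrix.PosDef.of_dotProduct_mulVec_pos (by simpa using Matrix.isHermitian_mul_conjTranspose_self B) ?_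
    intro x hx
    have hsx : star x = x := by simp
    rw [hsx, ← Matrix.mulVec_mulVec, dotProduct_comm, mulVec_dot]
    have hne : Bᵀ *ᵥ x ≠ 0 := fun h => hx (hBTinj x h)
    have hnn : (0:ℝ) ≤ (Bᵀ *ᵥ x) ⬝ᵥ (Bᵀ *ᵥ x) := Finset.sum_nonneg fun t _ => mul_self_nonneg _
    rcases hnn.lt_or_eq with h | h
    · exact h
    · exact absurd (dotProduct_self_eq_zero.mp h.symm) hne
  have hdetG : IsUnit (B * Bᵀ).det := isUnit_iff_ne_zero.mpr (ne_of_gt hGpd.det_pos)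
  have hGsym : (B * Bᵀ)ᵀ = B * Bᵀ := by simpa using hGpd.1
  have hGinvT : ((B * Bᵀ)⁻¹)ᵀ = (B * Bᵀ)⁻¹ := by rw [Matrix.transpose_nonsing_inv, hGsym]
  set P := Bᵀ * (B * Bᵀ)⁻¹ * B with hPdef
  have hPT : Pᵀ = P := by
    rw [hPdef, transpose_mul, transpose_mul, transpose_transpose, hGinvT, ← Matrix.mul_assoc]
  have hBGB : Bᵀ * (B*Bᵀ)⁻¹ * B * Bᵀ = Bᵀ := by
    rw [Matrix.mul_assoc (Bᵀ * (B*Bᵀ)⁻¹) B Bᵀ, Matrix.mul_assoc Bᵀ ((B*Bᵀ)⁻¹) (B*Bᵀ),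
      Matrix.nonsing_inv_mul _ hdetG, Matrix.mul_one]
  have hPP : P * P = P := by
    calc P * P = (Bᵀ * (B*Bᵀ)⁻¹ * B * Bᵀ) * ((B*Bᵀ)⁻¹ * B) := by
          rw [hPdef]; simp only [Matrix.mul_assoc]
    _ = P := by rw [hBGB, hPdef, Matrix.mul_assoc]
  have hPN : P * (Bᵀ * SW * B) = Bᵀ * SW * B := by
    calc P * (Bᵀ * SW * B) = (Bᵀ * (B*Bᵀ)⁻¹ * B * Bᵀ) * (SW * B) := by
          rw [hPdef]; simp only [Matrix.mul_assoc]
    _ = Bᵀ * SW * B := by rw [hBGB, Matrix.mul_assoc]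
  have hSWT : SWᵀ = SW := (by simpa using hSW.1 : SW.IsSymm).eq
  have hNT : (Bᵀ * SW * B)ᵀ = Bᵀ * SW * B := by
    rw [transpose_mul, transpose_mul, transpose_transpose, hSWT, ← Matrix.mul_assoc]
  have hNP : (Bᵀ * SW * B) * P = Bᵀ * SW * B := by
    have h := congrArg Matrix.transpose hPN
    rw [transpose_mul, hPT, hNT] at h
    exact h
  have hcol : ∀ j : Fin m, (fun t => P t j) = P *ᵥ Pi.single j 1 := by
    intro j; funext t; simp [Matrix.mulVec_single]
  have hrange : ∀ j : Fin m, P *ᵥ Pi.single j 1 =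
      (R*B)ᵀ *ᵥ (R⁻¹ *ᵥ (((B*Bᵀ)⁻¹ * B) *ᵥ Pi.single j 1)) := by
    intro j
    rw [transpose_mul, hRT, Matrix.mulVec_mulVec, Matrix.mul_assoc Bᵀ R R⁻¹,
      Matrix.mul_nonsing_inv _ hdetR, Matrix.mul_one, hPdef, Matrix.mul_assoc,
      ← Matrix.mulVec_mulVec]
  have hentry : ∀ l j : Fin m, P l j = (fun t => P t l) ⬝ᵥ (fun t => P t j) := by
    intro l j
    have h1 : P l j = (P * P) l j := by rw [hPP]
    rw [h1, Matrix.mul_apply]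
    refine Finset.sum_congr rfl fun t _ => ?_
    congr 1
    exact (congrFun (congrFun hPT l) t).symm
  have hdiag : ∀ j : Fin m,
      (P *ᵥ Pi.single j 1) ⬝ᵥ ((Bᵀ*SW*B) *ᵥ (P *ᵥ Pi.single j 1)) = (Bᵀ*SW*B) j j := by
    intro j
    rw [mulVec_dot, Matrix.mulVec_mulVec, Matrix.mulVec_mulVec, hPT, hPN, hNP]
    simp [dotProduct, Matrix.mulVec_single, Pi.single_apply]
  have hNjj : ∀ j, (Bᵀ*SW*B) j j = ∑ k, (R.mulVec (fun s => B s j)) k ^ 2 := by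
    intro j
    rw [hNC, Matrix.mul_apply]
    refine Finset.sum_congr rfl fun k _ => ?_
    simp [Matrix.mul_apply, Matrix.mulVec, dotProduct, sq]
  have hl2 : ∀ j, l2norm (R.mulVec (fun s => B s j)) ^ 2 = (Bᵀ*SW*B) j j := by
    intro j
    rw [l2norm, Real.sq_sqrt (Finset.sum_nonneg fun k _ => sq_nonneg _), hNjj]
  obtain ⟨hpos, hF⟩ := eig_facts hK hKm B hB SW R hSW hR hRR
  set lam := eigDesc (Bᵀ * SW * B) (⟨K - 1, Nat.sub_one_lt_of_le hK hKm⟩ : Fin m) with hlamdef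
  have hlam0 : (0:ℝ) ≤ lam := le_of_lt hpos
  have hbound : ∀ j : Fin m,
      lam * ((P *ᵥ Pi.single j 1) ⬝ᵥ (P *ᵥ Pi.single j 1)) ≤
        l2norm (R.mulVec (fun s => B s j)) ^ 2 := by
    intro j
    calc lam * ((P *ᵥ Pi.single j 1) ⬝ᵥ (P *ᵥ Pi.single j 1)) ≤
        (P *ᵥ Pi.single j 1) ⬝ᵥ ((Bᵀ*SW*B) *ᵥ (P *ᵥ Pi.single j 1)) := by
          rw [hrange j]
          exact hF _
    _ = (Bᵀ*SW*B) j j := hdiag j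
    _ = l2norm (R.mulVec (fun s => B s j)) ^ 2 := (hl2 j).symm
  -- Cauchy-Schwarz
  have hα : (0:ℝ) ≤ (P *ᵥ Pi.single l 1) ⬝ᵥ (P *ᵥ Pi.single l 1) :=
    Finset.sum_nonneg fun t _ => mul_self_nonneg _
  have hβ : (0:ℝ) ≤ (P *ᵥ Pi.single j 1) ⬝ᵥ (P *ᵥ Pi.single j 1) :=
    Finset.sum_nonneg fun t _ => mul_self_nonneg _
  have hCS : (P l j)^2 ≤ ((P *ᵥ Pi.single l 1) ⬝ᵥ (P *ᵥ Pi.single l 1)) *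
      ((P *ᵥ Pi.single j 1) ⬝ᵥ (P *ᵥ Pi.single j 1)) := by
    rw [hentry l j, hcol l, hcol j]
    have h := Finset.sum_mul_sq_le_sq_mul_sq Finset.univ
      (fun t => (P *ᵥ Pi.single l 1) t) (fun t => (P *ᵥ Pi.single j 1) t)
    simp only [dotProduct, sq] at h ⊢
    exact h
  have h1 : |P l j| * lam = Real.sqrt ((P l j)^2 * lam^2) := by
    rw [Real.sqrt_mul (sq_nonneg _), Real.sqrt_sq_eq_abs, Real.sqrt_sq hlam0]
  have h3 : (P l j)^2 * lam^2 ≤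
      (lam * ((P *ᵥ Pi.single l 1) ⬝ᵥ (P *ᵥ Pi.single l 1))) *
      (lam * ((P *ᵥ Pi.single j 1) ⬝ᵥ (P *ᵥ Pi.single j 1))) := by
    nlinarith [sq_nonneg lam, hCS, hα, hβ]
  have h4 : (lam * ((P *ᵥ Pi.single l 1) ⬝ᵥ (P *ᵥ Pi.single l 1))) *
      (lam * ((P *ᵥ Pi.single j 1) ⬝ᵥ (P *ᵥ Pi.single j 1))) ≤
      l2norm (R.mulVec (fun s => B s l)) ^ 2 * l2norm (R.mulVec (fun s => B s j)) ^ 2 :=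
    mul_le_mul (hbound l) (hbound j) (mul_nonneg hlam0 hβ) (sq_nonneg _)
  calc |P l j| * lam = Real.sqrt ((P l j)^2 * lam^2) := h1
  _ ≤ Real.sqrt (l2norm (R.mulVec (fun s => B s l)) ^ 2 * l2norm (R.mulVec (fun s => B s j)) ^ 2) :=
      Real.sqrt_le_sqrt (h3.trans h4)
  _ = l2norm (R.mulVec (fun s => B s l)) * l2norm (R.mulVec (fun s => B s j)) := by
      rw [Real.sqrt_mul (sq_nonneg _),
        Real.sqrt_sq (l2norm_nonneg (R *ᵥ fun s => B s l)),
        Real.sqrt_sq (l2norm_nonneg (R *ᵥ fun s => B s j))]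

end Main

/-- Entrywise bound on `Θ P_B` via the row ℓ1 norm of `Θ`, the columns of `Σ_W^{1/2} B`,
and the K-th largest eigenvalue of `Bᵀ Σ_W B`. -/
theorem stmt3 (p m K : ℕ) (hK : 0 < K) (hKm : K ≤ m)
    (Θ : Matrix (Fin p) (Fin m) ℝ) (B : Matrix (Fin K) (Fin m) ℝ) (hB : B.rank = K)
    (SW R : Matrix (Fin K) (Fin K) ℝ) (hSW : SW.PosDef)
    (hR : R.PosSemidef) (hRR : R * R = SW)
    (i : Fin p) (j : Fin m) :
    |(Θ * (Bᵀ * (B * Bᵀ)⁻¹ * B)) i j| ≤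
      l1norm (fun l => Θ i l) * (⨆ l : Fin m, l2norm (R.mulVec (fun k => B k l))) *
        l2norm (R.mulVec (fun k => B k j)) / eigDesc (Bᵀ * SW * B) ⟨K - 1, by omega⟩ := by
  obtain ⟨hpos, -⟩ := eig_facts hK hKm B hB SW R hSW hR hRR
  set lam := eigDesc (Bᵀ * SW * B) (⟨K - 1, by omega⟩ : Fin m) with hlamdef
  set S := ⨆ l : Fin m, l2norm (R.mulVec (fun k => B k l)) with hSdef
  set P := Bᵀ * (B * Bᵀ)⁻¹ * B with hPdef
  have hterm : ∀ l : Fin m, |P l j| ≤ S * l2norm (R.mulVec (fun k => B k j)) / lam := by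
    intro l
    have h := entry_bound hK hKm B hB SW R hSW hR hRR l j
    have hle : l2norm (R.mulVec (fun k => B k l)) ≤ S :=
      le_ciSup (f := fun l : Fin m => l2norm (R.mulVec (fun k => B k l)))
        (Set.Finite.bddAbove (Set.finite_range _)) l
    have h2 : |P l j| * lam ≤ S * l2norm (R.mulVec (fun k => B k j)) :=
      h.trans (mul_le_mul_of_nonneg_right hle (l2norm_nonneg _))
    rw [le_div_iff₀ hpos]
    exact h2
  have hsum : |(Θ * P) i j| ≤
      ∑ l, |Θ i l| * (S * l2norm (R.mulVec (fun k => B k j)) / lam) := by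
    rw [Matrix.mul_apply]
    refine (Finset.abs_sum_le_sum_abs _ _).trans ?_
    refine Finset.sum_le_sum fun l _ => ?_
    rw [abs_mul]
    exact mul_le_mul_of_nonneg_left (hterm l) (abs_nonneg _)
  refine hsum.trans (le_of_eq ?_)
  rw [← Finset.sum_mul, l1norm]
  ring
end

section
/- Let X ∈ R^{n×p}, ỹ ∈ R^n, λ3 > 0, and let Θ̂ be a minimizer of f(θ) = (1/n)‖ỹ - Xθ‖_2^2 + λ3‖θ‖_1. Let Θ̄ ∈ R^p be any vector with supp(Θ̄) ⊆ S, |S| ≤ s. Suppose the cross term satisfies (2/n)|⟨XΔ, ỹ - XΘ̄⟩| ≤ (λ3/2)‖Δ‖_1 + (2/n)‖XΔ‖_2 R for all Δ = Θ̂-Θ̄ and some R ≥ 0. Then (1/n)‖XΔ‖_2^2 ≤ (2/n)‖XΔ‖_2 R + (3/2)λ3‖Δ_S‖_1 - (1/2)λ3‖Δ_{S^c}‖_1. -/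
open Matrix MeasureTheory

/-- Deterministic basic inequality for the lasso with an additional bias term `R`. -/
theorem stmt18 (n p s : ℕ) (hn : 0 < n)
    (X : Matrix (Fin n) (Fin p) ℝ) (yt : Fin n → ℝ)
    (lam3 : ℝ) (hlam3 : 0 < lam3)
    (Θh : Fin p → ℝ)
    (hmin : ∀ θ : Fin p → ℝ,
      (1 / (n : ℝ)) * ∑ i, (yt i - X.mulVec Θh i) ^ 2 + lam3 * l1norm Θh ≤
        (1 / (n : ℝ)) * ∑ i, (yt i - X.mulVec θ i) ^ 2 + lam3 * l1norm θ)
    (Θb : Fin p → ℝ) (S : Finset (Fin p)) (hcard : S.card ≤ s)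
    (hsupp : ∀ j, j ∉ S → Θb j = 0)
    (R : ℝ) (hR : 0 ≤ R)
    (hcross : (2 / (n : ℝ)) *
        |∑ i, X.mulVec (Θh - Θb) i * (yt i - X.mulVec Θb i)| ≤
      (lam3 / 2) * l1norm (Θh - Θb) +
        (2 / (n : ℝ)) * l2norm (X.mulVec (Θh - Θb)) * R) :
    (1 / (n : ℝ)) * ∑ i, (X.mulVec (Θh - Θb) i) ^ 2 ≤
      (2 / (n : ℝ)) * l2norm (X.mulVec (Θh - Θb)) * R +
        (3 / 2) * lam3 * ∑ j ∈ S, |(Θh - Θb) j| -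
          (1 / 2) * lam3 * ∑ j ∈ Sᶜ, |(Θh - Θb) j| := by

  set D := X.mulVec (Θh - Θb) with hDdef
  have hD : ∀ i, D i = X.mulVec Θh i - X.mulVec Θb i := by
    intro i; simp [hDdef, Matrix.mulVec_sub]
  have hexp : ∑ i, (yt i - X.mulVec Θh i) ^ 2 =
      ∑ i, (yt i - X.mulVec Θb i) ^ 2 - 2 * ∑ i, D i * (yt i - X.mulVec Θb i)
        + ∑ i, D i ^ 2 := by
    rw [Finset.mul_sum, ← Finset.sum_sub_distrib, ← Finset.sum_add_distrib]
    refine Finset.sum_congr rfl fun i _ => ?_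
    rw [hD i]; ring
  have hnpos : (0:ℝ) < n := by exact_mod_cast hn
  have hbasic : (1 / (n : ℝ)) * ∑ i, D i ^ 2 ≤
      (2 / (n : ℝ)) * ∑ i, D i * (yt i - X.mulVec Θb i)
        + lam3 * (l1norm Θb - l1norm Θh) := by
    have h := hmin Θb
    rw [hexp] at h
    have h2 : (1 / (n : ℝ)) * (∑ i, (yt i - X.mulVec Θb i) ^ 2
        - 2 * ∑ i, D i * (yt i - X.mulVec Θb i) + ∑ i, D i ^ 2)
        = (1 / (n : ℝ)) * ∑ i, (yt i - X.mulVec Θb i) ^ 2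
          - (2 / (n : ℝ)) * ∑ i, D i * (yt i - X.mulVec Θb i)
          + (1 / (n : ℝ)) * ∑ i, D i ^ 2 := by ring
    rw [h2] at h
    linarith
  have habs : ∑ i, D i * (yt i - X.mulVec Θb i) ≤
      |∑ i, D i * (yt i - X.mulVec Θb i)| := le_abs_self _
  have h2n : (0:ℝ) ≤ 2 / (n : ℝ) := by positivity
  have hcross' : (2 / (n : ℝ)) * ∑ i, D i * (yt i - X.mulVec Θb i) ≤
      (lam3 / 2) * l1norm (Θh - Θb) + (2 / (n : ℝ)) * l2norm D * R := by
    calc (2 / (n : ℝ)) * ∑ i, D i * (yt i - X.mulVec Θb i)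
        ≤ (2 / (n : ℝ)) * |∑ i, D i * (yt i - X.mulVec Θb i)| :=
          mul_le_mul_of_nonneg_left habs h2n
      _ ≤ _ := hcross
  have hsplit : l1norm (Θh - Θb) = ∑ j ∈ S, |(Θh - Θb) j| + ∑ j ∈ Sᶜ, |(Θh - Θb) j| := by
    rw [l1norm, ← Finset.sum_add_sum_compl S]
  have hcone : l1norm Θb - l1norm Θh ≤
      ∑ j ∈ S, |(Θh - Θb) j| - ∑ j ∈ Sᶜ, |(Θh - Θb) j| := by
    have hb : l1norm Θb = ∑ j ∈ S, |Θb j| := by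
      rw [l1norm, ← Finset.sum_add_sum_compl S]
      have : ∑ j ∈ Sᶜ, |Θb j| = 0 := by
        apply Finset.sum_eq_zero; intro j hj
        rw [hsupp j (Finset.mem_compl.mp hj), abs_zero]
      rw [this, add_zero]
    have hh : l1norm Θh = ∑ j ∈ S, |Θh j| + ∑ j ∈ Sᶜ, |(Θh - Θb) j| := by
      rw [l1norm, ← Finset.sum_add_sum_compl S]
      congr 1
      refine Finset.sum_congr rfl fun j hj => ?_
      rw [Pi.sub_apply, hsupp j (Finset.mem_compl.mp hj), sub_zero]
    rw [hb, hh]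
    have : ∑ j ∈ S, |Θb j| - ∑ j ∈ S, |Θh j| ≤ ∑ j ∈ S, |(Θh - Θb) j| := by
      rw [← Finset.sum_sub_distrib]
      apply Finset.sum_le_sum
      intro j _
      rw [Pi.sub_apply, abs_sub_comm]
      exact abs_sub_abs_le_abs_sub _ _
    linarith
  have hlam3' : (0:ℝ) ≤ lam3 := le_of_lt hlam3
  nlinarith [mul_le_mul_of_nonneg_left hcone hlam3', hbasic, hcross', hsplit]
end

section
/- Let ξ ∈ R^d be a centered γ-sub-Gaussian random vector, i.e., E[exp(⟨u, ξ⟩)] ≤ exp(‖u‖_2^2 γ^2 / 2) for all u ∈ R^d. Then for every symmetric positive semidefinite matrix H ∈ R^{d×d} and every t ≥ 0, P( ξ^T H ξ > γ^2 (√(tr(H)) + √(2‖H‖_op t))^2 ) ≤ e^{-t}. -/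
open Matrix MeasureTheory

open Real ProbabilityTheory

section Aux

lemma gauss_lintegral (c v : ℝ) (hc : c < 1/2) :
    ∫⁻ x, ENNReal.ofReal (Real.exp (c * x^2 + v * x)) ∂(gaussianReal 0 1)
      = ENNReal.ofReal (Real.exp (v^2 / (2*(1-2*c))) / Real.sqrt (1 - 2*c)) := by
  have hb : (0:ℝ) < 1/2 - c := by linarith
  set b : ℝ := 1/2 - c with hbdef
  set m : ℝ := v / (2*b) with hmdef
  have hbne : b ≠ 0 := ne_of_gt hb
  have hmeasf : Measurable fun x : ℝ => ENNReal.ofReal (Real.exp (c * x^2 + v * x)) := by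
    fun_prop
  rw [gaussianReal_of_var_ne_zero 0 one_ne_zero,
    lintegral_withDensity_eq_lintegral_mul _ (measurable_gaussianPDF 0 1) hmeasf]
  have hpdf : ∀ x : ℝ, gaussianPDF 0 1 x = ENNReal.ofReal (gaussianPDFReal 0 1 x) := fun _ => rfl
  have key : ∀ x : ℝ, gaussianPDFReal 0 1 x * Real.exp (c * x^2 + v * x)
      = ((Real.sqrt (2*π))⁻¹ * Real.exp (v^2 / (2*(1-2*c)))) * Real.exp (-b * (x - m)^2) := by
    intro x
    have h1 : Real.sqrt (2*π*((1:NNReal):ℝ)) = Real.sqrt (2*π) := by norm_num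
    have harg : -(x-(0:ℝ))^2/(2*((1:NNReal):ℝ)) + (c*x^2+v*x)
        = v^2/(2*(1-2*c)) + (-b*(x-m)^2) := by
      push_cast
      rw [show (1:ℝ)-2*c = 2*b from by rw [hbdef]; ring, hmdef]
      field_simp
      ring
    rw [gaussianPDFReal, h1, mul_assoc ((Real.sqrt (2*π))⁻¹), ← Real.exp_add, harg,
      Real.exp_add, ← mul_assoc]
  have hint2 : Integrable (fun x : ℝ =>
      ((Real.sqrt (2*π))⁻¹ * Real.exp (v^2 / (2*(1-2*c)))) * Real.exp (-b * (x - m)^2)) := by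
    exact ((integrable_exp_neg_mul_sq hb).comp_sub_right m).const_mul _
  calc ∫⁻ x, (gaussianPDF 0 1 * fun x => ENNReal.ofReal (Real.exp (c * x^2 + v * x))) x
      = ∫⁻ x, ENNReal.ofReal (gaussianPDFReal 0 1 x * Real.exp (c * x^2 + v * x)) := by
        congr 1; funext x
        simp only [Pi.mul_apply, hpdf]
        rw [← ENNReal.ofReal_mul (gaussianPDFReal_nonneg 0 1 x)]
    _ = ENNReal.ofReal (∫ x, gaussianPDFReal 0 1 x * Real.exp (c * x^2 + v * x)) := by
        rw [← ofReal_integral_eq_lintegral_ofReal]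
        · simp_rw [key]; exact hint2
        · exact Filter.Eventually.of_forall fun x =>
            mul_nonneg (gaussianPDFReal_nonneg 0 1 x) (Real.exp_nonneg _)
    _ = ENNReal.ofReal (Real.exp (v^2 / (2*(1-2*c))) / Real.sqrt (1 - 2*c)) := by
        congr 1
        simp_rw [key]
        rw [integral_const_mul _ _, integral_sub_right_eq_self (fun x => Real.exp (-b * x^2)) m,
          integral_gaussian]
        have h2b : (1:ℝ) - 2*c = 2*b := by rw [hbdef]; ring
        rw [h2b]
        rw [div_eq_mul_inv, mul_comm ((Real.sqrt (2*π))⁻¹) _, mul_assoc]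
        congr 1
        rw [← Real.sqrt_inv, ← Real.sqrt_mul (by positivity), ← Real.sqrt_inv]
        congr 1
        field_simp

lemma gauss_mgf (v : ℝ) :
    ∫⁻ x, ENNReal.ofReal (Real.exp (v * x)) ∂(gaussianReal 0 1)
      = ENNReal.ofReal (Real.exp (v^2 / 2)) := by
  have h := gauss_lintegral 0 v (by norm_num)
  simp only [zero_mul, zero_add, mul_zero, sub_zero, mul_one, Real.sqrt_one, div_one] at h
  convert h using 3 <;> norm_num

lemma gauss_sq {c : ℝ} (hc : c < 1/2) :
    ∫⁻ x, ENNReal.ofReal (Real.exp (c * x^2)) ∂(gaussianReal 0 1)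
      = ENNReal.ofReal (1 / Real.sqrt (1 - 2*c)) := by
  have h := gauss_lintegral c 0 hc
  simp only [zero_mul, add_zero, ne_eq, OfNat.ofNat_ne_zero, not_false_eq_true, zero_pow,
    zero_div, Real.exp_zero] at h
  exact h

lemma lintegral_pi_prod {ν : Measure ℝ} [IsProbabilityMeasure ν] :
    ∀ (d : ℕ) (f : Fin d → ℝ → ENNReal), (∀ i, Measurable (f i)) →
    ∫⁻ g : Fin d → ℝ, ∏ i, f i (g i) ∂(Measure.pi fun _ => ν) = ∏ i, ∫⁻ x, f i x ∂ν := by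
  intro d
  induction d with
  | zero =>
      intro f hf
      simp [lintegral_const, Measure.pi_univ]
  | succ n ih =>
      intro f hf
      have hMP := (measurePreserving_piFinSuccAbove (fun _ : Fin (n+1) => ν) 0)
      rw [(hMP.symm (MeasurableEquiv.piFinSuccAbove (fun _ => ℝ) 0)).lintegral_map_equiv]
      simp_rw [MeasurableEquiv.piFinSuccAbove_symm_apply, Fin.insertNthEquiv,
        Equiv.coe_fn_mk, Fin.insertNth_zero, Fin.prod_univ_succ, Fin.cons_zero, Fin.cons_succ,
        cast_eq]
      rw [lintegral_prod_mul (f := f 0) (g := fun y : Fin n → ℝ => ∏ i, f i.succ (y i))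
        (hf 0).aemeasurable
        (Finset.measurable_prod Finset.univ fun i _ =>
          (hf i.succ).comp (measurable_pi_apply i)).aemeasurable,
        ih (fun i => f i.succ) (fun i => hf i.succ)]

lemma one_div_sqrt_le_exp {x y : ℝ} (hx0 : 0 ≤ x) (hxy : x ≤ y) (hy : y < 1) :
    1 / Real.sqrt (1 - x) ≤ Real.exp (x / (2 * (1 - y))) := by
  have h1x : 0 < 1 - x := by linarith
  have h1y : 0 < 1 - y := by linarith
  have hlog : -Real.log (1-x) ≤ x/(1-y) := by
    have h := Real.log_le_sub_one_of_pos (inv_pos.mpr h1x)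
    rw [Real.log_inv] at h
    have h2 : (1-x)⁻¹ - 1 = x/(1-x) := by field_simp; ring
    have h3 : x/(1-x) ≤ x/(1-y) := by
      apply div_le_div_of_nonneg_left hx0 h1y
      linarith
    rw [h2] at h
    linarith
  have hpos : 0 < 1 / Real.sqrt (1-x) := by positivity
  rw [← Real.exp_log hpos]
  apply Real.exp_le_exp.mpr
  rw [Real.log_div one_ne_zero (by positivity), Real.log_one, Real.log_sqrt h1x.le]
  have heq : x / (2 * (1 - y)) = (x/(1-y))/2 := by
    rw [mul_comm 2 (1-y), ← div_div]
  rw [heq]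
  linarith

end Aux

set_option maxHeartbeats 2000000 in
/-- Tail bound for quadratic forms of a centered γ-sub-Gaussian random vector:
`P(ξᵀHξ > γ²(√tr(H) + √(2‖H‖_op t))²) ≤ e^{-t}`. -/
theorem stmt19 {Ω : Type*} [MeasurableSpace Ω] (μ : Measure Ω) [IsProbabilityMeasure μ]
    (d : ℕ) (γ : ℝ) (hγ : 0 < γ)
    (ξ : Ω → Fin d → ℝ) (hmeas : Measurable ξ)
    (hcent : ∀ i, ∫ ω, ξ ω i ∂μ = 0)
    (hint : ∀ u : Fin d → ℝ, Integrable (fun ω => Real.exp (∑ i, u i * ξ ω i)) μ)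
    (hsub : ∀ u : Fin d → ℝ,
      ∫ ω, Real.exp (∑ i, u i * ξ ω i) ∂μ ≤ Real.exp ((∑ i, (u i) ^ 2) * γ ^ 2 / 2))
    (H : Matrix (Fin d) (Fin d) ℝ) (hH : H.PosSemidef) (t : ℝ) (ht : 0 ≤ t) :
    μ {ω | γ ^ 2 * (Real.sqrt H.trace + Real.sqrt (2 * opNorm H * t)) ^ 2 <
        ξ ω ⬝ᵥ H.mulVec (ξ ω)} ≤ ENNReal.ofReal (Real.exp (-t)) := by
  -- trivial case t = 0
  rcases eq_or_lt_of_le ht with htz | htpos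
  · rw [← htz]
    calc μ _ ≤ 1 := prob_le_one
      _ = ENNReal.ofReal (Real.exp (-0)) := by simp
  clear ht
  -- spectral setup
  set ev : Fin d → ℝ := hH.1.eigenvalues with hevdef
  set U : Matrix (Fin d) (Fin d) ℝ := (hH.1.eigenvectorUnitary : Matrix (Fin d) (Fin d) ℝ)
    with hUdef
  have hspec : H = U * diagonal ev * Uᵀ := by
    simpa [U, ev, Matrix.star_eq_conjTranspose,
      Matrix.conjTranspose_eq_transpose_of_trivial] using hH.1.spectral_theorem
  have hUorth : Uᵀ * U = 1 := by
    simpa [U, Matrix.star_eq_conjTranspose, Matrix.conjTranspose_eq_transpose_of_trivial]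
      using Unitary.coe_star_mul_self hH.1.eigenvectorUnitary
  have hev0 : ∀ i, 0 ≤ ev i := fun i => hH.eigenvalues_nonneg i
  set a : ℝ := H.trace with hadef
  set b : ℝ := opNorm H with hbdef
  have ha_sum : a = ∑ i, ev i := by
    calc a = (U * diagonal ev * Uᵀ).trace := by rw [hadef, ← hspec]
      _ = (Uᵀ * (U * diagonal ev)).trace := by rw [Matrix.trace_mul_comm]
      _ = (diagonal ev).trace := by rw [← Matrix.mul_assoc, hUorth, Matrix.one_mul]
      _ = ∑ i, ev i := by rw [Matrix.trace_diagonal]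
  have hevb : ∀ i, ev i ≤ b := by
    intro i
    set T := LinearMap.toContinuousLinearMap (Matrix.toEuclideanLin H)
    set v : EuclideanSpace ℝ (Fin d) := hH.1.eigenvectorBasis i
    have hv1 : ‖v‖ = 1 := hH.1.eigenvectorBasis.orthonormal.1 i
    have hTv : T v = ev i • v := by
      have h1 := hH.1.mulVec_eigenvectorBasis i
      apply (WithLp.equiv 2 (Fin d → ℝ)).injective
      simp only [T, LinearMap.coe_toContinuousLinearMap', WithLp.equiv_apply, Matrix.ofLp_toEuclideanLin_apply]
      simp only [WithLp.ofLp_smul]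
      exact h1
    have h2 : ‖T v‖ ≤ ‖T‖ := by
      calc ‖T v‖ ≤ ‖T‖ * ‖v‖ := T.le_opNorm v
        _ = ‖T‖ := by rw [hv1, mul_one]
    rw [hTv, norm_smul, hv1, mul_one] at h2
    calc ev i ≤ ‖ev i‖ := le_abs_self _
      _ ≤ b := h2
  have ha0 : 0 ≤ a := by
    rw [ha_sum]; exact Finset.sum_nonneg fun i _ => hev0 i
  -- quadratic form identities
  have q1 : ∀ x : Fin d → ℝ, x ⬝ᵥ H *ᵥ x = ∑ i, ev i * ((Uᵀ *ᵥ x) i)^2 := by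
    intro x
    rw [hspec, ← Matrix.mulVec_mulVec, ← Matrix.mulVec_mulVec, Matrix.dotProduct_mulVec,
      ← Matrix.mulVec_transpose]
    simp only [dotProduct, Matrix.mulVec_diagonal]
    exact Finset.sum_congr rfl fun i _ => by ring
  have q2 : ∀ (c x : Fin d → ℝ), ∑ i, c i * (Uᵀ *ᵥ x) i = ∑ j, (U *ᵥ c) j * x j := by
    intro c x
    have h : c ⬝ᵥ (Uᵀ *ᵥ x) = (U *ᵥ c) ⬝ᵥ x := by
      rw [Matrix.dotProduct_mulVec, ← Matrix.mulVec_transpose, Matrix.transpose_transpose]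
    simpa [dotProduct] using h
  have q3 : ∀ c : Fin d → ℝ, ∑ j, ((U *ᵥ c) j)^2 = ∑ i, (c i)^2 := by
    intro c
    have h : (U *ᵥ c) ⬝ᵥ (U *ᵥ c) = c ⬝ᵥ c := by
      rw [Matrix.dotProduct_mulVec, ← Matrix.mulVec_transpose, Matrix.mulVec_mulVec, hUorth,
        Matrix.one_mulVec]
    simpa [dotProduct, pow_two] using h
  -- degenerate case a = 0
  rcases eq_or_lt_of_le ha0 with haz | hapos
  · have hevz : ∀ i, ev i = 0 := by
      intro i
      have := (Finset.sum_eq_zero_iff_of_nonneg (fun i _ => hev0 i)).mp (by rw [← ha_sum, ← haz])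
      exact this i (Finset.mem_univ i)
    have hset : {ω | γ ^ 2 * (Real.sqrt a + Real.sqrt (2 * b * t)) ^ 2 <
        ξ ω ⬝ᵥ H.mulVec (ξ ω)} = ∅ := by
      apply Set.eq_empty_iff_forall_notMem.mpr
      intro ω hω
      simp only [Set.mem_setOf_eq] at hω
      have hz : ξ ω ⬝ᵥ H.mulVec (ξ ω) = 0 := by
        rw [show H.mulVec (ξ ω) = H *ᵥ ξ ω from rfl, q1]
        apply Finset.sum_eq_zero
        intro i _
        rw [hevz i, zero_mul]
      rw [hz] at hω
      have : (0:ℝ) ≤ γ ^ 2 * (Real.sqrt a + Real.sqrt (2 * b * t)) ^ 2 := by positivity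
      linarith
    rw [hset, measure_empty]
    exact zero_le
  -- main case
  have hbpos : 0 < b := by
    obtain ⟨i, hi⟩ : ∃ i, 0 < ev i := by
      by_contra hcon
      push_neg at hcon
      have : a ≤ 0 := by
        rw [ha_sum]; exact Finset.sum_nonpos fun i _ => hcon i
      linarith
    exact lt_of_lt_of_le hi (hevb i)
  set sa : ℝ := Real.sqrt a with hsadef
  set r : ℝ := Real.sqrt (2 * b * t) with hrdef
  have hsapos : 0 < sa := Real.sqrt_pos.mpr hapos
  have hrpos : 0 < r := Real.sqrt_pos.mpr (by positivity)
  set w : ℝ := sa + r with hwdef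
  have hwpos : 0 < w := by positivity
  set s : ℝ := r / (2 * b * w) with hsdef
  have hspos : 0 < s := by positivity
  have h1m2sb : 1 - 2 * s * b = sa / w := by
    rw [hsdef]
    field_simp
    ring
  have h2sb : 2 * s * b < 1 := by
    have : (0:ℝ) < sa / w := by positivity
    linarith [h1m2sb]
  have h1m2sbpos : 0 < 1 - 2 * s * b := by rw [h1m2sb]; positivity
  set lam : ℝ := s / γ ^ 2 with hlamdef
  have hγ2 : (0:ℝ) < γ ^ 2 := by positivity
  have hlampos : 0 < lam := by positivity
  have hslam : lam * γ ^ 2 = s := by rw [hlamdef]; field_simp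
  have hsev_half : ∀ i, s * ev i < 1 / 2 := by
    intro i
    have h1 : s * ev i ≤ s * b := mul_le_mul_of_nonneg_left (hevb i) hspos.le
    nlinarith
  -- measures and functions
  set ν : Measure (Fin d → ℝ) := Measure.pi (fun _ : Fin d => gaussianReal 0 1) with hνdef
  have : IsProbabilityMeasure ν := by rw [hνdef]; infer_instance
  set Z : Ω → ℝ := fun ω => ξ ω ⬝ᵥ H *ᵥ ξ ω with hZdef
  set cvec : (Fin d → ℝ) → Fin d → ℝ := fun g i => Real.sqrt (2 * lam * ev i) * g i with hcvdef
  set uvec : (Fin d → ℝ) → Fin d → ℝ := fun g => U *ᵥ (cvec g) with huvdef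
  -- Step A: decoupling identity
  have stepA : ∀ x : Fin d → ℝ, ENNReal.ofReal (Real.exp (lam * (x ⬝ᵥ H *ᵥ x)))
      = ∫⁻ g, ENNReal.ofReal (Real.exp (∑ i, cvec g i * (Uᵀ *ᵥ x) i)) ∂ν := by
    intro x
    have hrw : ∀ g : Fin d → ℝ, ENNReal.ofReal (Real.exp (∑ i, cvec g i * (Uᵀ *ᵥ x) i))
        = ∏ i, ENNReal.ofReal
            (Real.exp ((Real.sqrt (2 * lam * ev i) * (Uᵀ *ᵥ x) i) * g i)) := by
      intro g
      rw [← ENNReal.ofReal_prod_of_nonneg (fun i _ => Real.exp_nonneg _), ← Real.exp_sum]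
      congr 2
      exact Finset.sum_congr rfl fun i _ => by rw [hcvdef]; ring
    simp_rw [hrw]
    rw [lintegral_pi_prod d
      (fun i u => ENNReal.ofReal (Real.exp ((Real.sqrt (2 * lam * ev i) * (Uᵀ *ᵥ x) i) * u)))
      (fun i => by fun_prop)]
    have hg : ∀ i : Fin d,
        ∫⁻ u, ENNReal.ofReal (Real.exp ((Real.sqrt (2 * lam * ev i) * (Uᵀ *ᵥ x) i) * u))
          ∂(gaussianReal 0 1)
        = ENNReal.ofReal (Real.exp (lam * (ev i * ((Uᵀ *ᵥ x) i)^2))) := by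
      intro i
      rw [gauss_mgf]
      congr 2
      rw [mul_pow, Real.sq_sqrt (mul_nonneg (by positivity) (hev0 i))]
      ring
    simp_rw [hg]
    rw [← ENNReal.ofReal_prod_of_nonneg (fun i _ => Real.exp_nonneg _), ← Real.exp_sum]
    congr 2
    rw [q1, Finset.mul_sum]
  -- Step B: Gaussian chi-square bound
  have stepB : ∫⁻ g, ENNReal.ofReal (Real.exp ((∑ j, (uvec g j)^2) * γ ^ 2 / 2)) ∂ν
      ≤ ENNReal.ofReal (Real.exp (s * a / (1 - 2 * s * b))) := by
    have hrw : ∀ g : Fin d → ℝ,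
        ENNReal.ofReal (Real.exp ((∑ j, (uvec g j)^2) * γ ^ 2 / 2))
        = ∏ i, ENNReal.ofReal (Real.exp ((s * ev i) * (g i)^2)) := by
      intro g
      rw [← ENNReal.ofReal_prod_of_nonneg (fun i _ => Real.exp_nonneg _), ← Real.exp_sum]
      congr 2
      rw [huvdef, q3]
      calc (∑ i, (cvec g i)^2) * γ ^ 2 / 2 = ∑ i, (cvec g i)^2 * γ ^ 2 / 2 := by
            rw [← Finset.sum_div, ← Finset.sum_mul]
        _ = ∑ i, (s * ev i) * (g i)^2 := by
            refine Finset.sum_congr rfl fun i _ => ?_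
            rw [hcvdef]
            simp only
            rw [mul_pow, Real.sq_sqrt (mul_nonneg (by positivity) (hev0 i))]
            linear_combination (ev i * (g i)^2) * hslam
    simp_rw [hrw]
    rw [hνdef, lintegral_pi_prod d
      (fun i u => ENNReal.ofReal (Real.exp ((s * ev i) * u^2))) (fun i => by fun_prop)]
    have heach : ∀ i : Fin d,
        ∫⁻ u, ENNReal.ofReal (Real.exp ((s * ev i) * u^2)) ∂(gaussianReal 0 1)
          = ENNReal.ofReal (1 / Real.sqrt (1 - 2*(s * ev i))) := fun i => gauss_sq (hsev_half i)
    simp_rw [heach]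
    calc ∏ i, ENNReal.ofReal (1 / Real.sqrt (1 - 2*(s * ev i)))
        ≤ ∏ i, ENNReal.ofReal (Real.exp ((2*(s * ev i)) / (2 * (1 - 2*s*b)))) := by
          refine Finset.prod_le_prod' fun i _ => ENNReal.ofReal_le_ofReal ?_
          exact one_div_sqrt_le_exp (mul_nonneg (by norm_num) (mul_nonneg hspos.le (hev0 i)))
            (by nlinarith [hevb i, hspos.le]) h2sb
      _ = ENNReal.ofReal (Real.exp (s * a / (1 - 2 * s * b))) := by
          rw [← ENNReal.ofReal_prod_of_nonneg (fun i _ => Real.exp_nonneg _), ← Real.exp_sum]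
          congr 2
          have hterm : ∀ i : Fin d, (2*(s * ev i)) / (2 * (1 - 2*s*b))
              = (s * ev i) / (1 - 2*s*b) := fun i => by
            rw [mul_div_mul_left _ _ (two_ne_zero)]
          simp_rw [hterm]
          rw [← Finset.sum_div, ← Finset.mul_sum, ← ha_sum]
  -- Step C: sub-Gaussian bound, for each g
  have stepC : ∀ g : Fin d → ℝ,
      ∫⁻ ω, ENNReal.ofReal (Real.exp (∑ j, uvec g j * ξ ω j)) ∂μ
        ≤ ENNReal.ofReal (Real.exp ((∑ j, (uvec g j)^2) * γ ^ 2 / 2)) := by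
    intro g
    rw [← ofReal_integral_eq_lintegral_ofReal (hint (uvec g))
      (Filter.Eventually.of_forall fun ω => Real.exp_nonneg _)]
    exact ENNReal.ofReal_le_ofReal (hsub (uvec g))
  -- measurability facts
  have hZmeas : Measurable Z := by
    rw [hZdef]
    simp only [dotProduct, Matrix.mulVec]
    apply Finset.measurable_sum
    intro i _
    exact ((measurable_pi_apply i).comp hmeas).mul
      (Finset.measurable_sum _ fun j _ => ((measurable_pi_apply j).comp hmeas).const_mul _)
  have hbigmeas : Measurable (Function.uncurry fun (ω : Ω) (g : Fin d → ℝ) =>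
      ENNReal.ofReal (Real.exp (∑ i, cvec g i * (Uᵀ *ᵥ ξ ω) i))) := by
    apply Measurable.ennreal_ofReal
    apply Real.measurable_exp.comp
    apply Finset.measurable_sum
    intro i _
    have h1 : Measurable fun p : Ω × (Fin d → ℝ) => cvec p.2 i := by
      rw [hcvdef]
      exact ((measurable_pi_apply i).comp measurable_snd).const_mul _
    have h2 : Measurable fun p : Ω × (Fin d → ℝ) => (Uᵀ *ᵥ ξ p.1) i := by
      simp only [Matrix.mulVec, dotProduct]
      apply Finset.measurable_sum
      intro j _
      exact ((measurable_pi_apply j).comp (hmeas.comp measurable_fst)).const_mul _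
    exact h1.mul h2
  -- Step D: Tonelli and combining
  have key : ∫⁻ ω, ENNReal.ofReal (Real.exp (lam * Z ω)) ∂μ
      ≤ ENNReal.ofReal (Real.exp (s * a / (1 - 2 * s * b))) := by
    calc ∫⁻ ω, ENNReal.ofReal (Real.exp (lam * Z ω)) ∂μ
        = ∫⁻ ω, ∫⁻ g, ENNReal.ofReal (Real.exp (∑ i, cvec g i * (Uᵀ *ᵥ ξ ω) i)) ∂ν ∂μ := by
          refine lintegral_congr fun ω => ?_
          rw [hZdef]
          exact stepA (ξ ω)
      _ = ∫⁻ g, ∫⁻ ω, ENNReal.ofReal (Real.exp (∑ i, cvec g i * (Uᵀ *ᵥ ξ ω) i)) ∂μ ∂ν :=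
          lintegral_lintegral_swap hbigmeas.aemeasurable
      _ = ∫⁻ g, ∫⁻ ω, ENNReal.ofReal (Real.exp (∑ j, uvec g j * ξ ω j)) ∂μ ∂ν := by
          refine lintegral_congr fun g => lintegral_congr fun ω => ?_
          rw [q2 (cvec g) (ξ ω)]
      _ ≤ ∫⁻ g, ENNReal.ofReal (Real.exp ((∑ j, (uvec g j)^2) * γ ^ 2 / 2)) ∂ν :=
          lintegral_mono stepC
      _ ≤ ENNReal.ofReal (Real.exp (s * a / (1 - 2 * s * b))) := stepB
  -- Markov / Chernoff
  have hAE : AEMeasurable (fun ω => ENNReal.ofReal (Real.exp (lam * Z ω))) μ :=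
    (Measurable.ennreal_ofReal (Real.measurable_exp.comp (hZmeas.const_mul lam))).aemeasurable
  have hsubset : {ω | γ ^ 2 * w ^ 2 < Z ω} ⊆
      {ω | ENNReal.ofReal (Real.exp (lam * (γ ^ 2 * w ^ 2)))
        ≤ ENNReal.ofReal (Real.exp (lam * Z ω))} := by
    intro ω hω
    simp only [Set.mem_setOf_eq] at hω ⊢
    exact ENNReal.ofReal_le_ofReal (Real.exp_le_exp.mpr
      (mul_le_mul_of_nonneg_left hω.le hlampos.le))
  have hmarkov := mul_meas_ge_le_lintegral₀ hAE (ENNReal.ofReal (Real.exp (lam * (γ ^ 2 * w ^ 2))))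
  have hchain : ENNReal.ofReal (Real.exp (lam * (γ ^ 2 * w ^ 2))) * μ {ω | γ ^ 2 * w ^ 2 < Z ω}
      ≤ ENNReal.ofReal (Real.exp (s * a / (1 - 2 * s * b))) :=
    le_trans (mul_le_mul_right (measure_mono hsubset) _) (le_trans hmarkov key)
  have heB : ENNReal.ofReal (Real.exp (lam * (γ ^ 2 * w ^ 2))) ≠ 0 := by
    simp [Real.exp_pos]
  rw [mul_comm] at hchain
  have hfinal : μ {ω | γ ^ 2 * w ^ 2 < Z ω}
      ≤ ENNReal.ofReal (Real.exp (s * a / (1 - 2 * s * b)))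
        / ENNReal.ofReal (Real.exp (lam * (γ ^ 2 * w ^ 2))) :=
    (ENNReal.le_div_iff_mul_le (Or.inl heB) (Or.inl ENNReal.ofReal_ne_top)).mpr hchain
  have hdiv : ENNReal.ofReal (Real.exp (s * a / (1 - 2 * s * b)))
      / ENNReal.ofReal (Real.exp (lam * (γ ^ 2 * w ^ 2))) = ENNReal.ofReal (Real.exp (-t)) := by
    rw [← ENNReal.ofReal_div_of_pos (Real.exp_pos _), ← Real.exp_sub]
    congr 1
    rw [Real.exp_eq_exp]
    have hlB : lam * (γ ^ 2 * w ^ 2) = s * w ^ 2 := by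
      rw [hlamdef]
      field_simp
    have hsaa : sa * sa = a := Real.mul_self_sqrt ha0
    have hrr : r * r = 2 * b * t := Real.mul_self_sqrt (by positivity)
    have hsw : s * w = r / (2 * b) := by
      rw [hsdef]
      field_simp
    rw [hlB, h1m2sb]
    calc s * a / (sa / w) - s * w ^ 2
        = s * sa * w - s * w ^ 2 := by
          rw [← hsaa]
          field_simp
      _ = (s * w) * (sa - w) := by ring
      _ = (r / (2 * b)) * (sa - w) := by rw [hsw]
      _ = -(r * r) / (2 * b) := by rw [hwdef]; ring
      _ = -t := by rw [hrr]; field_simp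
  rw [hdiv] at hfinal
  exact hfinal
end
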